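/- Let f_LS : ℝ → ℝ be defined by f_LS(z) = −(z − 1)² + 1. Let k ≥ 1, let x₁, …, x_k be i.i.d. real-valued random variables with distribution P, and let y₁, …, y_k be i.i.d. real-valued random variables with distribution Q, with all 2k variables mutually independent. Let C : ℝ → ℝ be measurable with C square-integrable under both P and Q, and write μ_x = E[C(x₁)], μ_y = E[C(y₁)], σ_x² = Var[C(x₁)], σ_y² = Var[C(y₁)], and let m̂ = (1/(2k))·Σ_{j=1}^k (C(x_j) + C(y_j)) be the mini-batch mixture mean. Then E[ (1/k)·Σ_{i=1}^k f_LS( C(x_i) − m̂ ) + (1/k)·Σ_{i=1}^k f_LS( m̂ − C(y_i) ) ] = E_{x ∼ P}[ f_LS( C(x) − (μ_x + μ_y)/2 ) ] + E_{y ∼ Q}[ f_LS( (μ_x + μ_y)/2 − C(y) ) ] + (σ_x² + σ_y²)/(2k). -/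

import Mathlib

open MeasureTheory ProbabilityTheory

noncomputable def fLS (z : ℝ) : ℝ := -(z - 1)^2 + 1

lemma l2_integrable_mul {Ω : Type*} [MeasurableSpace Ω] {μ : Measure Ω} {f g : Ω → ℝ}
    (hf : MemLp f 2 μ) (hg : MemLp g 2 μ) :
    Integrable (fun ω => f ω * g ω) μ := by
  have h : (fun ω => f ω * g ω)
      = fun ω => ((f ω + g ω)^2 - f ω^2 - g ω^2) * (1/2) := by
    funext ω; ring
  rw [h]
  exact (((hf.add hg).integrable_sq.sub hf.integrable_sq).sub hg.integrable_sq).mul_const _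

lemma sum_fLS_sub {k : ℕ} (a : Fin k → ℝ) (m : ℝ) :
    ∑ i, fLS (a i - m) =
      -∑ i, (a i)^2 + 2*(m+1)*(∑ i, a i) - (k : ℝ)*((m+1)^2 - 1) := by
  have h : ∀ i : Fin k, fLS (a i - m)
      = -(a i)^2 + (2*(m+1)*(a i) - ((m+1)^2 - 1)) := by
    intro i; unfold fLS; ring
  rw [Finset.sum_congr rfl (fun i _ => h i)]
  rw [Finset.sum_add_distrib, Finset.sum_sub_distrib, ← Finset.mul_sum, Finset.sum_neg_distrib,
    Finset.sum_const, Finset.card_univ, Fintype.card_fin, nsmul_eq_mul]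
  ring

lemma sum_fLS_sub' {k : ℕ} (b : Fin k → ℝ) (m : ℝ) :
    ∑ i, fLS (m - b i) =
      -∑ i, (b i)^2 + 2*(m-1)*(∑ i, b i) - (k : ℝ)*((m-1)^2 - 1) := by
  have h : ∀ i : Fin k, fLS (m - b i)
      = -(b i)^2 + (2*(m-1)*(b i) - ((m-1)^2 - 1)) := by
    intro i; unfold fLS; ring
  rw [Finset.sum_congr rfl (fun i _ => h i)]
  rw [Finset.sum_add_distrib, Finset.sum_sub_distrib, ← Finset.mul_sum, Finset.sum_neg_distrib,
    Finset.sum_const, Finset.card_univ, Fintype.card_fin, nsmul_eq_mul]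
  ring

lemma integral_fLS_sub {P : Measure ℝ} [IsProbabilityMeasure P] {C : ℝ → ℝ}
    (hC2 : MemLp C 2 P) (m : ℝ) :
    ∫ z, fLS (C z - m) ∂P
      = -(∫ z, (C z)^2 ∂P) + 2*(m+1)*(∫ z, C z ∂P) - ((m+1)^2 - 1) := by
  have hC1 : Integrable C P := hC2.integrable one_le_two
  have hC2' : Integrable (fun z => (C z)^2) P := hC2.integrable_sq
  have h : (fun z => fLS (C z - m))
      = fun z => (2*(m+1)) * C z - ((C z)^2 + ((m+1)^2 - 1)) := by
    funext z; unfold fLS; ring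
  have h2 : Integrable (fun z => (C z)^2 + ((m+1)^2 - 1)) P :=
    hC2'.add (integrable_const _)
  rw [h, integral_sub (hC1.const_mul _) h2,
    integral_const_mul, integral_add hC2' (integrable_const _), integral_const,
    probReal_univ]
  simp; ring

lemma integral_fLS_sub' {Q : Measure ℝ} [IsProbabilityMeasure Q] {C : ℝ → ℝ}
    (hC2 : MemLp C 2 Q) (m : ℝ) :
    ∫ z, fLS (m - C z) ∂Q
      = -(∫ z, (C z)^2 ∂Q) + 2*(m-1)*(∫ z, C z ∂Q) - ((m-1)^2 - 1) := by
  have hC1 : Integrable C Q := hC2.integrable one_le_two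
  have hC2' : Integrable (fun z => (C z)^2) Q := hC2.integrable_sq
  have h : (fun z => fLS (m - C z))
      = fun z => (2*(m-1)) * C z - ((C z)^2 + ((m-1)^2 - 1)) := by
    funext z; unfold fLS; ring
  have h2 : Integrable (fun z => (C z)^2 + ((m-1)^2 - 1)) Q :=
    hC2'.add (integrable_const _)
  rw [h, integral_sub (hC1.const_mul _) h2,
    integral_const_mul, integral_add hC2' (integrable_const _), integral_const,
    probReal_univ]
  simp; ring

lemma variance_eq_second_moment {P : Measure ℝ} [IsProbabilityMeasure P] {C : ℝ → ℝ}
    (hC2 : MemLp C 2 P) (μx : ℝ) (hμx : μx = ∫ z, C z ∂P) :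
    ∫ z, (C z - μx)^2 ∂P = (∫ z, (C z)^2 ∂P) - μx^2 := by
  have hC1 : Integrable C P := hC2.integrable one_le_two
  have hC2' : Integrable (fun z => (C z)^2) P := hC2.integrable_sq
  have h : (fun z => (C z - μx)^2)
      = fun z => ((C z)^2 + μx^2) - (2*μx) * C z := by
    funext z; ring
  have h2 : Integrable (fun z => (C z)^2 + μx^2) P := hC2'.add (integrable_const _)
  rw [h, integral_sub h2 (hC1.const_mul _),
    integral_add hC2' (integrable_const _), integral_const, integral_const_mul,
    probReal_univ, ← hμx]
  simp; ring

theorem rcLSGAN_bias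
    {Ω : Type*} [MeasurableSpace Ω] (μ : Measure Ω) [IsProbabilityMeasure μ]
    (P Q : Measure ℝ) [IsProbabilityMeasure P] [IsProbabilityMeasure Q]
    (k : ℕ) (hk : 1 ≤ k)
    (x y : Fin k → Ω → ℝ)
    (hxm : ∀ i, Measurable (x i)) (hym : ∀ j, Measurable (y j))
    (hx_law : ∀ i, μ.map (x i) = P) (hy_law : ∀ j, μ.map (y j) = Q)
    (hindep : iIndepFun (Sum.elim x y) μ)
    (C : ℝ → ℝ) (hCm : Measurable C)
    (hC2P : MemLp C 2 P) (hC2Q : MemLp C 2 Q)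
    (μx μy σx2 σy2 : ℝ)
    (hμx : μx = ∫ z, C z ∂P) (hμy : μy = ∫ z, C z ∂Q)
    (hσx2 : σx2 = ∫ z, (C z - μx)^2 ∂P) (hσy2 : σy2 = ∫ z, (C z - μy)^2 ∂Q)
    (mhat : Ω → ℝ)
    (hmhat : mhat = fun ω => (1 / (2 * (k : ℝ))) * ∑ j : Fin k, (C (x j ω) + C (y j ω))) :
    ∫ ω, ((1 / (k : ℝ)) * ∑ i : Fin k, fLS (C (x i ω) - mhat ω)
          + (1 / (k : ℝ)) * ∑ i : Fin k, fLS (mhat ω - C (y i ω))) ∂μ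
      = (∫ z, fLS (C z - (μx + μy) / 2) ∂P)
        + (∫ z, fLS ((μx + μy) / 2 - C z) ∂Q)
        + (σx2 + σy2) / (2 * k) := by
  have hkR : (k : ℝ) ≠ 0 := Nat.cast_ne_zero.mpr (by omega)
  -- the combined family of 2k random variables
  set A : Fin k ⊕ Fin k → Ω → ℝ := fun s => C ∘ Sum.elim x y s with hA
  have hAinl : ∀ i ω, A (Sum.inl i) ω = C (x i ω) := fun i ω => rfl
  have hAinr : ∀ j ω, A (Sum.inr j) ω = C (y j ω) := fun j ω => rfl
  set M : Fin k ⊕ Fin k → ℝ := Sum.elim (fun _ => μx) (fun _ => μy) with hM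
  set M2v : Fin k ⊕ Fin k → ℝ :=
    Sum.elim (fun _ => ∫ z, (C z)^2 ∂P) (fun _ => ∫ z, (C z)^2 ∂Q) with hM2v
  have hA2 : ∀ s, MemLp (A s) 2 μ := by
    rintro (i | j)
    · exact (memLp_map_measure_iff hCm.aestronglyMeasurable (hxm i).aemeasurable).mp
        (by rw [hx_law i]; exact hC2P)
    · exact (memLp_map_measure_iff hCm.aestronglyMeasurable (hym j).aemeasurable).mp
        (by rw [hy_law j]; exact hC2Q)
  have hAint : ∀ s, Integrable (A s) μ := fun s => (hA2 s).integrable one_le_two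
  have hA2int : ∀ s, Integrable (fun ω => (A s ω)^2) μ := fun s => (hA2 s).integrable_sq
  have hmulint : ∀ s t, Integrable (fun ω => A s ω * A t ω) μ :=
    fun s t => l2_integrable_mul (hA2 s) (hA2 t)
  -- first moments
  have hEA : ∀ s, ∫ ω, A s ω ∂μ = M s := by
    rintro (i | j)
    · calc ∫ ω, A (Sum.inl i) ω ∂μ
          = ∫ z, C z ∂(μ.map (x i)) :=
            (integral_map (hxm i).aemeasurable hCm.aestronglyMeasurable).symm
        _ = μx := by rw [hx_law i, hμx]
    · calc ∫ ω, A (Sum.inr j) ω ∂μ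
          = ∫ z, C z ∂(μ.map (y j)) :=
            (integral_map (hym j).aemeasurable hCm.aestronglyMeasurable).symm
        _ = μy := by rw [hy_law j, hμy]
  -- second moments
  have hEA2 : ∀ s, ∫ ω, (A s ω)^2 ∂μ = M2v s := by
    rintro (i | j)
    · calc ∫ ω, (A (Sum.inl i) ω)^2 ∂μ
          = ∫ z, (C z)^2 ∂(μ.map (x i)) :=
            (integral_map (hxm i).aemeasurable
              (hCm.pow_const 2).aestronglyMeasurable).symm
        _ = ∫ z, (C z)^2 ∂P := by rw [hx_law i]
    · calc ∫ ω, (A (Sum.inr j) ω)^2 ∂μ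
          = ∫ z, (C z)^2 ∂(μ.map (y j)) :=
            (integral_map (hym j).aemeasurable
              (hCm.pow_const 2).aestronglyMeasurable).symm
        _ = ∫ z, (C z)^2 ∂Q := by rw [hy_law j]
  -- cross moments via independence
  have hIndA : iIndepFun A μ :=
    hindep.comp (fun _ => C) (fun _ => hCm)
  have hpair : ∀ s t, ∫ ω, A s ω * A t ω ∂μ = if s = t then M2v s else M s * M t := by
    intro s t
    by_cases h : s = t
    · subst h
      rw [if_pos rfl, ← hEA2 s]
      congr 1; funext ω; ring
    · rw [if_neg h, ← hEA s, ← hEA t]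
      have hmul := (hIndA.indepFun h).integral_mul_eq_mul_integral
        (hA2 s).aestronglyMeasurable (hA2 t).aestronglyMeasurable
      simpa [Pi.mul_apply] using hmul
  -- the value of E[S^2]
  have hS2 : ∫ ω, (∑ s, A s ω)^2 ∂μ
      = ((k : ℝ)*μx + k*μy)^2 + ((∫ z, (C z)^2 ∂P)*k + (∫ z, (C z)^2 ∂Q)*k)
        - (k*μx^2 + k*μy^2) := by
    have h1 : (fun ω => (∑ s, A s ω)^2) = fun ω => ∑ s, ∑ t, A s ω * A t ω := by
      funext ω; rw [sq, Finset.sum_mul_sum]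
    rw [h1, integral_finset_sum _
      (fun s _ => integrable_finset_sum _ (fun t _ => hmulint s t))]
    have h2 : ∀ s : Fin k ⊕ Fin k, ∫ ω, ∑ t, A s ω * A t ω ∂μ
        = ∑ t, (if s = t then M2v s else M s * M t) := by
      intro s
      rw [integral_finset_sum _ (fun t _ => hmulint s t)]
      exact Finset.sum_congr rfl (fun t _ => hpair s t)
    rw [Finset.sum_congr rfl (fun s _ => h2 s)]
    have h3 : ∀ s : Fin k ⊕ Fin k, ∑ t, (if s = t then M2v s else M s * M t)
        = M s * (∑ t, M t) + (M2v s - M s * M s) := by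
      intro s
      have h4 : ∀ t : Fin k ⊕ Fin k, (if s = t then M2v s else M s * M t)
          = M s * M t + (if s = t then M2v s - M s * M s else 0) := by
        intro t
        by_cases h : s = t
        · subst h; simp
        · simp [h]
      rw [Finset.sum_congr rfl (fun t _ => h4 t), Finset.sum_add_distrib,
        ← Finset.mul_sum, Finset.sum_ite_eq, if_pos (Finset.mem_univ s)]
    rw [Finset.sum_congr rfl (fun s _ => h3 s)]
    have hsumM : ∑ t, M t = (k:ℝ)*μx + k*μy := by
      simp [hM, Fintype.sum_sum_type, Finset.sum_const, Finset.card_univ, mul_comm]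
    rw [Finset.sum_add_distrib, ← Finset.sum_mul, hsumM]
    simp only [hM, hM2v, Fintype.sum_sum_type, Sum.elim_inl, Sum.elim_inr,
      Finset.sum_const, Finset.card_univ, Fintype.card_fin, nsmul_eq_mul,
      Finset.sum_sub_distrib]
    ring
  -- pointwise rewriting of the integrand
  have hpt : ∀ ω, ((1 / (k : ℝ)) * ∑ i : Fin k, fLS (C (x i ω) - mhat ω)
          + (1 / (k : ℝ)) * ∑ i : Fin k, fLS (mhat ω - C (y i ω)))
      = (-(1/(k:ℝ))) * (∑ s, (A s ω)^2)
        + ((1/(2*(k:ℝ)^2)) * (∑ s, A s ω)^2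
          + ((2/(k:ℝ)) * ((∑ i : Fin k, C (x i ω)) - ∑ i : Fin k, C (y i ω)))) := by
    intro ω
    have hmω : mhat ω = (1 / (2 * (k : ℝ)))
        * ((∑ i : Fin k, C (x i ω)) + ∑ i : Fin k, C (y i ω)) := by
      rw [hmhat]; simp [Finset.sum_add_distrib]
    have hsq : ∑ s, (A s ω)^2
        = (∑ i : Fin k, (C (x i ω))^2) + ∑ i : Fin k, (C (y i ω))^2 := by
      simp [hA, Fintype.sum_sum_type]
    have hsum : ∑ s, A s ω
        = (∑ i : Fin k, C (x i ω)) + ∑ i : Fin k, C (y i ω) := by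
      simp [hA, Fintype.sum_sum_type]
    rw [sum_fLS_sub (fun i => C (x i ω)) (mhat ω),
      sum_fLS_sub' (fun i => C (y i ω)) (mhat ω), hsq, hsum, hmω]
    field_simp
    ring
  rw [integral_congr_ae (Filter.Eventually.of_forall hpt)]
  -- integrability of the pieces
  have I1 : Integrable (fun ω => ∑ s, (A s ω)^2) μ :=
    integrable_finset_sum _ (fun s _ => hA2int s)
  have hSmem : MemLp (fun ω => ∑ s, A s ω) 2 μ :=
    memLp_finset_sum _ (fun s _ => hA2 s)
  have I2 : Integrable (fun ω => (∑ s, A s ω)^2) μ := hSmem.integrable_sq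
  have I3 : Integrable (fun ω => ∑ i : Fin k, C (x i ω)) μ := by
    exact integrable_finset_sum _ (fun i _ => hAint (Sum.inl i))
  have I4 : Integrable (fun ω => ∑ i : Fin k, C (y i ω)) μ := by
    exact integrable_finset_sum _ (fun i _ => hAint (Sum.inr i))
  have I34 : Integrable (fun ω => (∑ i : Fin k, C (x i ω)) - ∑ i : Fin k, C (y i ω)) μ :=
    I3.sub I4
  have J2 : Integrable (fun ω => (1/(2*(k:ℝ)^2)) * (∑ s, A s ω)^2
      + ((2/(k:ℝ)) * ((∑ i : Fin k, C (x i ω)) - ∑ i : Fin k, C (y i ω)))) μ :=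
    (I2.const_mul _).add (I34.const_mul _)
  rw [integral_add (I1.const_mul _) J2,
    integral_add (I2.const_mul _) (I34.const_mul _),
    integral_const_mul, integral_const_mul, integral_const_mul,
    integral_sub I3 I4]
  -- values of the integrals
  have hV1 : ∫ ω, ∑ s, (A s ω)^2 ∂μ
      = (∫ z, (C z)^2 ∂P)*k + (∫ z, (C z)^2 ∂Q)*k := by
    rw [integral_finset_sum _ (fun s _ => hA2int s),
      Finset.sum_congr rfl (fun s _ => hEA2 s)]
    simp [hM2v, Fintype.sum_sum_type, Finset.sum_const, Finset.card_univ, mul_comm]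
  have hV3 : ∫ ω, ∑ i : Fin k, C (x i ω) ∂μ = (k:ℝ)*μx := by
    rw [integral_finset_sum (μ := μ) Finset.univ
      (f := fun (i : Fin k) (ω : Ω) => C (x i ω)) (fun i _ => hAint (Sum.inl i))]
    have : ∀ i : Fin k, ∫ ω, C (x i ω) ∂μ = μx := fun i => hEA (Sum.inl i)
    rw [Finset.sum_congr rfl (fun i _ => this i)]
    simp [mul_comm]
  have hV4 : ∫ ω, ∑ i : Fin k, C (y i ω) ∂μ = (k:ℝ)*μy := by
    rw [integral_finset_sum (μ := μ) Finset.univ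
      (f := fun (i : Fin k) (ω : Ω) => C (y i ω)) (fun i _ => hAint (Sum.inr i))]
    have : ∀ i : Fin k, ∫ ω, C (y i ω) ∂μ = μy := fun i => hEA (Sum.inr i)
    rw [Finset.sum_congr rfl (fun i _ => this i)]
    simp [mul_comm]
  rw [hV1, hS2, hV3, hV4]
  -- right hand side
  rw [integral_fLS_sub hC2P, integral_fLS_sub' hC2Q, hσx2, hσy2,
    variance_eq_second_moment hC2P μx hμx, variance_eq_second_moment hC2Q μy hμy,
    ← hμx, ← hμy]
  field_simp
  ring
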